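/- Let μ: [0, T] → ℝ be integrable with 0 ≤ μ(x) ≤ μ_f for all x, let 0 < a ≤ T, and suppose ∫₀^a μ(Δ) dΔ = g·F₁ and ∫_a^T μ(Δ) dΔ = (1−g)·F₁ for some g ∈ [0,1] and F₁ > 0 with μ_f·a = F₁. Then for any constants K ≥ 0 and e > 0 with K ≥ e·T, ∫₀^T μ(Δ)·(K − e·Δ) dΔ ≤ F₁·K − F₁·e·a/2. -/

import Mathlib

open intervalIntegral MeasureTheory

/-- Key analytic lemma in the proof that the revenue-optimal dynamic toll in
the MFD framework operates the system at maximum throughput. -/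
theorem mfd_revenue_upper_bound
    (μ : ℝ → ℝ) (T a muf g F1 K e : ℝ)
    (hT : 0 < T)
    (hint : IntervalIntegrable μ MeasureTheory.volume 0 T)
    (hbound : ∀ x ∈ Set.Icc (0 : ℝ) T, 0 ≤ μ x ∧ μ x ≤ muf)
    (ha0 : 0 < a) (haT : a ≤ T)
    (hg : g ∈ Set.Icc (0 : ℝ) 1) (hF1 : 0 < F1)
    (hI1 : ∫ Δ in (0 : ℝ)..a, μ Δ = g * F1)
    (hI2 : ∫ Δ in a..T, μ Δ = (1 - g) * F1)
    (hmufa : muf * a = F1)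
    (hK : 0 ≤ K) (he : 0 < e) (hKT : e * T ≤ K) :
    ∫ Δ in (0 : ℝ)..T, μ Δ * (K - e * Δ) ≤ F1 * K - F1 * e * a / 2 := by
  have ha : (0:ℝ) ≤ a := ha0.le
  have h0T : (0:ℝ) ≤ T := hT.le
  have hsub1 : Set.uIcc (0:ℝ) a ⊆ Set.uIcc (0:ℝ) T := by
    rw [Set.uIcc_of_le ha, Set.uIcc_of_le h0T]
    exact Set.Icc_subset_Icc le_rfl haT
  have hsub2 : Set.uIcc a T ⊆ Set.uIcc (0:ℝ) T := by
    rw [Set.uIcc_of_le haT, Set.uIcc_of_le h0T]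
    exact Set.Icc_subset_Icc ha le_rfl
  have hμ1 : IntervalIntegrable μ MeasureTheory.volume 0 a := hint.mono_set hsub1
  have hμ2 : IntervalIntegrable μ MeasureTheory.volume a T := hint.mono_set hsub2
  have hcw : Continuous (fun Δ : ℝ => K - e * Δ) := by continuity
  have hint1 : IntervalIntegrable (fun Δ => μ Δ * (K - e * Δ)) MeasureTheory.volume 0 a :=
    hμ1.mul_continuousOn hcw.continuousOn
  have hint2 : IntervalIntegrable (fun Δ => μ Δ * (K - e * Δ)) MeasureTheory.volume a T :=
    hμ2.mul_continuousOn hcw.continuousOn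
  have hsplit : (∫ Δ in (0:ℝ)..T, μ Δ * (K - e * Δ))
      = (∫ Δ in (0:ℝ)..a, μ Δ * (K - e * Δ)) + ∫ Δ in a..T, μ Δ * (K - e * Δ) :=
    (intervalIntegral.integral_add_adjacent_intervals hint1 hint2).symm
  have hwa : 0 ≤ K - e * a := by nlinarith
  -- bound on [0,a]
  have hg1 : IntervalIntegrable
      (fun Δ => muf * (K - e * Δ) + (μ Δ - muf) * (K - e * a)) MeasureTheory.volume 0 a :=
    ((continuous_const.mul hcw).intervalIntegrable 0 a).add
      ((hμ1.sub (intervalIntegrable_const)).mul_const _)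
  have hb1 : (∫ Δ in (0:ℝ)..a, μ Δ * (K - e * Δ))
      ≤ ∫ Δ in (0:ℝ)..a, (muf * (K - e * Δ) + (μ Δ - muf) * (K - e * a)) := by
    apply intervalIntegral.integral_mono_on ha hint1 hg1
    intro x hx
    have hμx := hbound x ⟨hx.1, hx.2.trans haT⟩
    nlinarith [mul_nonneg (mul_nonneg (sub_nonneg.2 hμx.2) he.le) (sub_nonneg.2 hx.2)]
  -- bound on [a,T]
  have hg2 : IntervalIntegrable (fun Δ => μ Δ * (K - e * a)) MeasureTheory.volume a T :=
    hμ2.mul_const _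
  have hb2 : (∫ Δ in a..T, μ Δ * (K - e * Δ)) ≤ ∫ Δ in a..T, μ Δ * (K - e * a) := by
    apply intervalIntegral.integral_mono_on haT hint2 hg2
    intro x hx
    have hμx := hbound x ⟨ha.trans hx.1, hx.2⟩
    nlinarith [mul_nonneg (mul_nonneg hμx.1 he.le) (sub_nonneg.2 hx.1)]
  -- compute the comparison integrals
  have hIw : (∫ Δ in (0:ℝ)..a, (K - e * Δ)) = K * a - e * a ^ 2 / 2 := by
    rw [intervalIntegral.integral_sub (g := fun x => e * x) intervalIntegrable_const
      ((continuous_const.mul continuous_id').intervalIntegrable 0 a),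
      intervalIntegral.integral_const_mul, integral_id, intervalIntegral.integral_const]
    simp only [smul_eq_mul, sub_zero]
    ring
  have hC1 : (∫ Δ in (0:ℝ)..a, (muf * (K - e * Δ) + (μ Δ - muf) * (K - e * a)))
      = muf * (K * a - e * a ^ 2 / 2) + (g * F1 - muf * a) * (K - e * a) := by
    rw [intervalIntegral.integral_add (f := fun Δ => muf * (K - e * Δ)) ((continuous_const.mul hcw).intervalIntegrable 0 a)
        ((hμ1.sub (intervalIntegrable_const)).mul_const _),
      intervalIntegral.integral_const_mul, hIw,
      intervalIntegral.integral_mul_const,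
      intervalIntegral.integral_sub hμ1 intervalIntegrable_const, hI1,
      intervalIntegral.integral_const]
    simp only [smul_eq_mul, sub_zero]
    ring
  have hC2 : (∫ Δ in a..T, μ Δ * (K - e * a)) = (1 - g) * F1 * (K - e * a) := by
    rw [intervalIntegral.integral_mul_const, hI2]
  rw [hsplit]
  rw [hC1] at hb1
  rw [hC2] at hb2
  nlinarith [hb1, hb2]
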